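/- Let Q be the center of the intersection polygon R*_k = ⋂_{i=1}^k R_{s+i} (inscribed regular m-gons of the projection disks of cones C(P_s, O(P_{s+i}, ε)) on the plane X.t = P_{s+k}.t), assuming R*_k ≠ ∅. Then for the point Q (with Q.t = P_{s+k}.t): sed(P_{s+i}, segment P_sQ) ≤ ε for every i ∈ [1, k]; in particular any point of R*_k is a feasible endpoint for a weak simplification segment. -/

import Mathlib

noncomputable section

/-- Points of ℝ³, written (x, y, t) with the third coordinate interpreted as time. -/
abbrev Pt : Type := EuclideanSpace ℝ (Fin 3)

/-- The time coordinate of a point. -/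
def tm (P : Pt) : ℝ := P 2

/-- Spatial (x,y)-Euclidean distance between two points of ℝ³. -/
def sdist (P Q : Pt) : ℝ := Real.sqrt ((P 0 - Q 0)^2 + (P 1 - Q 1)^2)

/-- The synchronized point of P w.r.t. the segment from Ps to E:
linear interpolation with coefficient c = (P.t - Ps.t)/(E.t - Ps.t). -/
def sync (Ps E P : Pt) : Pt := Ps + ((tm P - tm Ps) / (tm E - tm Ps)) • (E - Ps)

/-- The synchronous Euclidean distance of P to the segment from Ps to E. -/
def sed (P Ps E : Pt) : ℝ := dist P (sync Ps E P)

/-- The spatio-temporal cone with apex Ps over the disk of radius ε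
centered at C in the plane X.t = C.t: the union of all segments from Ps
to points of that disk. -/
def cone (Ps C : Pt) (ε : ℝ) : Set Pt :=
  {X | ∃ Z : Pt, tm Z = tm C ∧ sdist Z C ≤ ε ∧ X ∈ segment ℝ Ps Z}

/-- The j-th vertex direction in the spatial plane (time coordinate 0). -/
def uvec3 (m j : ℕ) : Pt :=
  WithLp.toLp 2 ![Real.cos (2 * Real.pi * j / m), Real.sin (2 * Real.pi * j / m), 0]

/-- The inscribed regular m-gon of the projection disk (on the plane
X.t = t_c) of the cone with apex Ps over the disk of radius ε centered at Pi:
the disk has center Ps + c·(Pi - Ps) and radius c·ε, c = (t_c - Ps.t)/(Pi.t - Ps.t). -/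
def projNgon (Ps Pi : Pt) (ε tc : ℝ) (m : ℕ) : Set Pt :=
  convexHull ℝ (Set.range fun j : Fin m =>
    (Ps + ((tc - tm Ps) / (tm Pi - tm Ps)) • (Pi - Ps)) +
      (((tc - tm Ps) / (tm Pi - tm Ps)) * ε) • uvec3 m (j : ℕ))

/-- if the intersection R*_k of the inscribed regular m-gons of the
projection disks on the plane X.t = P_{s+k}.t is nonempty, then every point Q of
R*_k (in particular its center) is a feasible endpoint for a weak simplification
segment: sed(P_{s+i}, segment P_sQ) ≤ ε for every i ∈ [1, k]. -/
theorem stmt19 (m : ℕ) (hm : 3 ≤ m) (k : ℕ) (hk : 1 ≤ k) (P : ℕ → Pt)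
    (hmono : ∀ i j : ℕ, i < j → j ≤ k → tm (P i) < tm (P j))
    (ε : ℝ) (hε : 0 < ε)
    (hne : (⋂ i ∈ Set.Icc 1 k, projNgon (P 0) (P i) ε (tm (P k)) m).Nonempty) :
    ∀ Q ∈ ⋂ i ∈ Set.Icc 1 k, projNgon (P 0) (P i) ε (tm (P k)) m,
      ∀ i : ℕ, 1 ≤ i → i ≤ k → sed (P i) (P 0) Q ≤ ε := by
  intro Q hQ i hi1 hik
  have hki : tm (P 0) < tm (P k) := hmono 0 k hk le_rfl
  have hti : tm (P 0) < tm (P i) := hmono 0 i hi1 hik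
  set t0 := tm (P 0) with ht0
  set tc := tm (P k) with htc
  set c : ℝ := (tc - t0) / (tm (P i) - t0) with hcdef
  have hc : 0 < c := div_pos (by linarith) (by linarith)
  set A : Pt → Pt := fun X => P 0 + (1 / c) • (X - P 0) with hA
  have hconv : Convex ℝ {X : Pt | tm X = tc ∧ dist (P i) (A X) ≤ ε} := by
    intro X hX Y hY a b ha hb hab
    have hb' : b = 1 - a := by linarith
    constructor
    · have : tm (a • X + b • Y) = a * tm X + b * tm Y := by
        simp [tm, PiLp.add_apply, PiLp.smul_apply, smul_eq_mul]
      rw [this, hX.1, hY.1]; linear_combination tc * hab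
    · have hAe : A (a • X + b • Y) = a • A X + b • A Y := by
        subst hb'; simp only [hA]; module
      rw [hAe]
      have h1 : A X ∈ Metric.closedBall (P i) ε := by
        simpa [Metric.mem_closedBall, dist_comm] using hX.2
      have h2 : A Y ∈ Metric.closedBall (P i) ε := by
        simpa [Metric.mem_closedBall, dist_comm] using hY.2
      have := convex_closedBall (P i) ε h1 h2 ha hb hab
      simpa [Metric.mem_closedBall, dist_comm] using this
  have hu : ∀ j : ℕ, ‖uvec3 m j‖ = 1 := by
    intro j
    have : ‖uvec3 m j‖ = Real.sqrt (∑ l : Fin 3, (uvec3 m j l) ^ 2) := by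
      rw [EuclideanSpace.norm_eq]
      congr 1; apply Finset.sum_congr rfl; intro l _; rw [Real.norm_eq_abs, sq_abs]
    rw [this, Fin.sum_univ_three]
    simp [uvec3, Real.cos_sq_add_sin_sq]
  have hsub : (Set.range fun j : Fin m =>
      (P 0 + ((tc - t0) / (tm (P i) - t0)) • (P i - P 0)) +
        (((tc - t0) / (tm (P i) - t0)) * ε) • uvec3 m (j : ℕ)) ⊆
      {X : Pt | tm X = tc ∧ dist (P i) (A X) ≤ ε} := by
    rintro _ ⟨j, rfl⟩
    have hcc : c * (tm (P i) - t0) = tc - t0 :=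
      div_mul_cancel₀ _ (ne_of_gt (by linarith : (0:ℝ) < tm (P i) - t0))
    constructor
    · show tm _ = tc
      have hu2 : uvec3 m (j : ℕ) 2 = 0 := by simp [uvec3]
      simp only [tm, PiLp.add_apply, PiLp.smul_apply, PiLp.sub_apply, smul_eq_mul, ← hcdef, hu2,
        mul_zero, add_zero]
      show t0 + c * (tm (P i) - t0) = tc
      rw [hcc]; ring
    · show dist (P i) (A _) ≤ ε
      have hAv : A ((P 0 + ((tc - t0) / (tm (P i) - t0)) • (P i - P 0)) +
          (((tc - t0) / (tm (P i) - t0)) * ε) • uvec3 m (j : ℕ)) = P i + ε • uvec3 m (j : ℕ) := by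
        simp only [hA, ← hcdef]
        have h1 : (1 / c) * c = 1 := by field_simp
        have h2 : (1 / c) * (c * ε) = ε := by field_simp
        rw [show P 0 + c • (P i - P 0) + (c * ε) • uvec3 m (j : ℕ) - P 0
            = c • (P i - P 0) + (c * ε) • uvec3 m (j : ℕ) by abel,
          smul_add, smul_smul, smul_smul, h1, h2, one_smul]
        abel
      rw [hAv, dist_eq_norm]
      have : P i - (P i + ε • uvec3 m (j : ℕ)) = -(ε • uvec3 m (j : ℕ)) := by abel
      rw [this, norm_neg, norm_smul, hu, Real.norm_eq_abs, abs_of_pos hε, mul_one]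
  have hQi : Q ∈ projNgon (P 0) (P i) ε tc m := by
    have := Set.mem_iInter₂.mp hQ i ⟨hi1, hik⟩
    exact this
  have hQmem : Q ∈ {X : Pt | tm X = tc ∧ dist (P i) (A X) ≤ ε} := by
    have := convexHull_min hsub hconv
    exact this hQi
  obtain ⟨hQt, hQd⟩ := hQmem
  have hsync : sync (P 0) Q (P i) = A Q := by
    rw [sync, hA]
    rw [hQt]
    show P 0 + ((tm (P i) - t0) / (tc - t0)) • (Q - P 0) = P 0 + (1 / c) • (Q - P 0)
    rw [hcdef, one_div, inv_div]
  rw [sed, hsync]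
  exact hQd
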